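/- Let {x^k} be a sequence of componentwise positive vectors in ℝ^N and let x̂ ∈ ℝ^N be nonnegative. If the sequence {I(x̂, x^k)} is nonincreasing and some subsequence {x^{m_k}} converges to x̂, then the whole sequence {x^k} converges to x̂. -/

import Mathlib

open Finset Filter Topology

noncomputable def dd {M N : ℕ} (A : Fin M → Fin N → ℝ) (x : Fin N → ℝ) (i : Fin M) : ℝ :=
  ∑ j, A i j * x j

noncomputable def ff {M N : ℕ} (A : Fin M → Fin N → ℝ) (b : Fin M → ℝ) (x : Fin N → ℝ) (j : Fin N) : ℝ :=
  ∑ i, A i j * b i / dd A x i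

noncomputable def EMop {M N : ℕ} (A : Fin M → Fin N → ℝ) (b : Fin M → ℝ) (x : Fin N → ℝ) : Fin N → ℝ :=
  fun j => x j * ff A b x j

noncomputable def KL {N : ℕ} (u v : Fin N → ℝ) : ℝ :=
  (∑ j, u j * Real.log (u j / v j)) - ∑ j, (u j - v j)

noncomputable def IAb {M N : ℕ} (A : Fin M → Fin N → ℝ) (b : Fin M → ℝ) (x : Fin N → ℝ) : ℝ :=
  (∑ i, b i * Real.log (b i / dd A x i)) - ∑ i, (b i - dd A x i)

noncomputable def finSup0 {ι : Type*} (s : Finset ι) (g : ι → ℝ) : ℝ :=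
  if h : s.Nonempty then s.sup' h g else 0

noncomputable def finInf0 {ι : Type*} (s : Finset ι) (g : ι → ℝ) : ℝ :=
  if h : s.Nonempty then s.inf' h g else 0


lemma term_nonneg (u v : ℝ) (hu : 0 ≤ u) (hv : 0 < v) :
    0 ≤ u * Real.log (u / v) - (u - v) := by
  rcases eq_or_lt_of_le hu with h | h
  · simp [← h]; positivity
  · have h1 : Real.log (v / u) ≤ v / u - 1 := Real.log_le_sub_one_of_pos (by positivity)
    have h2 : Real.log (u / v) = - Real.log (v / u) := by
      rw [← Real.log_inv]; congr 1; field_simp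
    rw [h2]
    have h3 := mul_le_mul_of_nonneg_left h1 hu
    have h4 : u * (v / u - 1) = v - u := by field_simp
    nlinarith

lemma key (u : ℝ) (hu : 0 < u) (v : ℕ → ℝ) (hv : ∀ k, 0 < v k)
    (h : Tendsto (fun k => u * Real.log (u / v k) - (u - v k)) atTop (nhds 0)) :
    Tendsto v atTop (nhds u) := by
  set g : ℝ → ℝ := fun t => u * Real.log u - u * Real.log t - (u - t) with hg
  have hrw : ∀ t : ℝ, 0 < t → u * Real.log (u / t) - (u - t) = g t := by
    intro t ht
    simp only [hg, Real.log_div hu.ne' ht.ne']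
    ring
  have hderiv : ∀ t : ℝ, 0 < t → HasDerivAt g (1 - u / t) t := by
    intro t ht
    have h1 : HasDerivAt (fun s : ℝ => u * Real.log u - u * Real.log s - (u - s))
        (0 - u * t⁻¹ - (0 - 1)) t :=
      ((hasDerivAt_const _ _).sub ((Real.hasDerivAt_log ht.ne').const_mul u)).sub
        ((hasDerivAt_const _ _).sub (hasDerivAt_id t))
    convert h1 using 1
    field_simp
    ring
  have hanti : StrictAntiOn g (Set.Ioc 0 u) := by
    apply strictAntiOn_of_deriv_neg (convex_Ioc 0 u)
    · intro t ht
      exact (hderiv t ht.1).continuousAt.continuousWithinAt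
    · intro t ht
      rw [interior_Ioc] at ht
      rw [(hderiv t ht.1).deriv]
      have : 1 < u / t := (one_lt_div ht.1).2 ht.2
      linarith
  have hmonog : StrictMonoOn g (Set.Ici u) := by
    apply strictMonoOn_of_deriv_pos (convex_Ici u)
    · intro t ht
      exact (hderiv t (lt_of_lt_of_le hu ht)).continuousAt.continuousWithinAt
    · intro t ht
      rw [interior_Ici] at ht
      rw [(hderiv t (hu.trans ht)).deriv]
      have : u / t < 1 := (div_lt_one (hu.trans ht)).2 ht
      linarith
  have hgu : g u = 0 := by simp [hg]
  rw [Metric.tendsto_atTop]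
  intro ε hε
  set ε' : ℝ := min ε (u / 2) with hε'
  have hε'pos : 0 < ε' := lt_min hε (by linarith)
  have hε'u : ε' < u := lt_of_le_of_lt (min_le_right _ _) (by linarith)
  have hlo : 0 < g (u - ε') := by
    rw [← hgu]
    exact hanti ⟨by linarith, by linarith⟩ ⟨hu, le_refl u⟩ (by linarith)
  have hhi : 0 < g (u + ε') := by
    rw [← hgu]
    exact hmonog (le_refl u) (by simp; linarith) (by linarith)
  set δ : ℝ := min (g (u - ε')) (g (u + ε')) with hδ
  have hδpos : 0 < δ := lt_min hlo hhi
  rw [Metric.tendsto_atTop] at h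
  obtain ⟨K, hK⟩ := h δ hδpos
  refine ⟨K, fun n hn => ?_⟩
  have hKn := hK n hn
  rw [Real.dist_eq, sub_zero, hrw (v n) (hv n)] at hKn
  have hgvn : g (v n) < δ := lt_of_le_of_lt (le_abs_self _) hKn
  have h1 : u - ε' < v n := by
    by_contra hc
    push_neg at hc
    have : g (u - ε') ≤ g (v n) :=
      hanti.antitoneOn ⟨hv n, by linarith⟩ ⟨by linarith, by linarith⟩ hc
    have : δ ≤ g (v n) := le_trans (min_le_left _ _) this
    linarith
  have h2 : v n < u + ε' := by
    by_contra hc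
    push_neg at hc
    have : g (u + ε') ≤ g (v n) :=
      hmonog.monotoneOn (by simp; linarith) (by simp; linarith) hc
    have : δ ≤ g (v n) := le_trans (min_le_right _ _) this
    linarith
  rw [Real.dist_eq]
  have : |v n - u| < ε' := abs_sub_lt_iff.2 ⟨by linarith, by linarith⟩
  exact lt_of_lt_of_le this (min_le_left _ _)

lemma KL_eq {N : ℕ} (u v : Fin N → ℝ) :
    KL u v = ∑ j, (u j * Real.log (u j / v j) - (u j - v j)) := by
  simp only [KL, Finset.sum_sub_distrib]

theorem stmt_10
    (N : ℕ) (hN : 0 < N)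
    (x : ℕ → Fin N → ℝ) (xh : Fin N → ℝ)
    (hx : ∀ k j, 0 < x k j)
    (hxh : ∀ j, 0 ≤ xh j)
    (hmono : Antitone (fun k => KL xh (x k)))
    (φ : ℕ → ℕ) (hφ : StrictMono φ)
    (hsub : Tendsto (fun k => x (φ k)) atTop (nhds xh)) :
    Tendsto x atTop (nhds xh) := by
  have hsubj : ∀ j, Tendsto (fun k => x (φ k) j) atTop (nhds (xh j)) := by
    intro j
    exact (tendsto_pi_nhds.mp hsub) j
  -- Step 1: KL along the subsequence tends to 0
  have hKLsub : Tendsto (fun k => KL xh (x (φ k))) atTop (nhds 0) := by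
    simp only [KL_eq]
    have : (0 : ℝ) = ∑ j : Fin N, (0 : ℝ) := by simp
    rw [this]
    apply tendsto_finset_sum
    intro j _
    rcases eq_or_lt_of_le (hxh j) with h0 | h0
    · have heq : (fun k => xh j * Real.log (xh j / x (φ k) j) - (xh j - x (φ k) j))
          = fun k => x (φ k) j := by
        funext k; rw [← h0]; ring
      rw [heq, h0]
      exact hsubj j
    · have hc : ContinuousAt (fun t : ℝ => xh j * Real.log (xh j / t) - (xh j - t)) (xh j) := by
        apply ContinuousAt.sub
        · exact ((Real.continuousAt_log (by simp [div_self h0.ne'])).comp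
            (continuousAt_const.div continuousAt_id h0.ne')).const_mul _
        · exact continuousAt_const.sub continuousAt_id
      have := hc.tendsto.comp (hsubj j)
      simpa [div_self h0.ne', Function.comp_def] using this
  -- Step 2: whole KL sequence tends to 0
  have hKLnn : ∀ k, 0 ≤ KL xh (x k) := by
    intro k
    rw [KL_eq]
    exact Finset.sum_nonneg fun j _ => term_nonneg _ _ (hxh j) (hx k j)
  have hKL : Tendsto (fun k => KL xh (x k)) atTop (nhds 0) := by
    rw [Metric.tendsto_atTop]
    intro ε hε
    rw [Metric.tendsto_atTop] at hKLsub
    obtain ⟨K, hK⟩ := hKLsub ε hε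
    refine ⟨φ K, fun n hn => ?_⟩
    have h1 : KL xh (x n) ≤ KL xh (x (φ K)) := hmono hn
    have h2 := hK K le_rfl
    rw [Real.dist_eq, sub_zero] at h2 ⊢
    rw [abs_of_nonneg (hKLnn _)] at h2 ⊢
    exact lt_of_le_of_lt h1 h2
  -- Step 3: each term tends to 0
  have hterm : ∀ j, Tendsto (fun k => xh j * Real.log (xh j / x k j) - (xh j - x k j))
      atTop (nhds 0) := by
    intro j
    apply squeeze_zero (fun k => term_nonneg _ _ (hxh j) (hx k j))
      (fun k => ?_) hKL
    rw [KL_eq]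
    exact Finset.single_le_sum (fun i _ => term_nonneg _ _ (hxh i) (hx k i)) (Finset.mem_univ j)
  -- Step 4: componentwise convergence
  rw [tendsto_pi_nhds]
  intro j
  rcases eq_or_lt_of_le (hxh j) with h0 | h0
  · have heq : (fun k => xh j * Real.log (xh j / x k j) - (xh j - x k j))
        = fun k => x k j := by
      funext k; rw [← h0]; ring
    have hth := hterm j
    rw [heq] at hth
    rw [← h0]
    exact hth
  · exact key (xh j) h0 (fun k => x k j) (fun k => hx k j) (hterm j)
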